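/- Let H be a finite-dimensional Hopf algebra over k with bijective antipode S, and let L ⊆ H be a left coideal subalgebra that is also a left coideal of a Hopf subalgebra containing the grouplike elements, and R* ⊆ H* a right coideal of H*. If for all h ∈ L and α ∈ R* one has ⟨α, S⁻¹(h)⟩ = ε(α)ε(h) = ⟨α, h⟩, then in the Drinfel'd double D(H) the straightening formulas hold: h·α = ⟨α₍₂₎, h₍₁₎⟩ α₍₁₎ h₍₂₎ and α·h = ⟨α₍₂₎, S⁻¹(h₍₁₎)⟩ h₍₂₎ α₍₁₎; in particular the subspaces L and R* of D(H) are permutable: L·R* = R*·L. -/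

import Mathlib

open TensorProduct

/-- The iterated comultiplication `H → H ⊗ (H ⊗ H)`, `h ↦ h₍₁₎ ⊗ h₍₂₎ ⊗ h₍₃₎`. -/
noncomputable def comul2 (k H : Type) [Field k] [Ring H] [HopfAlgebra k H] :
    H →ₗ[k] H ⊗[k] (H ⊗[k] H) :=
  (LinearMap.lTensor H (Coalgebra.comul (R := k) (A := H))).comp
    (Coalgebra.comul (R := k) (A := H))

/-- The comultiplication on the dual `H*` of a finite-dimensional Hopf algebra `H`,
dual to the multiplication of `H`: `⟨Δ(α), x ⊗ y⟩ = α(xy)`. -/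
noncomputable def comulDual (k H : Type) [Field k] [Ring H] [HopfAlgebra k H]
    [FiniteDimensional k H] :
    Module.Dual k H →ₗ[k] Module.Dual k H ⊗[k] Module.Dual k H :=
  (TensorProduct.dualDistribEquiv k H H).symm.toLinearMap ∘ₗ
    (LinearMap.mul' k H).dualMap

/- ### Auxiliary lemmas -/

/-- Every element of a tensor product is a finite (Fin-indexed) sum of simple tensors. -/
theorem exists_fin_rep {k M N : Type} [Field k] [AddCommGroup M] [AddCommGroup N]
    [Module k M] [Module k N] (x : M ⊗[k] N) :
    ∃ (n : ℕ) (a : Fin n → M) (b : Fin n → N), x = ∑ i, a i ⊗ₜ[k] b i := by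
  obtain ⟨S, hS⟩ := TensorProduct.exists_finset x
  refine ⟨S.card, fun i => (S.equivFin.symm i : M × N).1,
    fun i => (S.equivFin.symm i : M × N).2, ?_⟩
  rw [hS, ← Finset.sum_attach S (fun p => p.1 ⊗ₜ[k] p.2)]
  exact (Equiv.sum_comp S.equivFin.symm (fun p => (p : M × N).1 ⊗ₜ[k] (p : M × N).2)).symm

/-- Fin-indexed representation with second legs in a submodule. -/
theorem exists_fin_rep_right {k M N : Type} [Field k] [AddCommGroup M] [AddCommGroup N]
    [Module k M] [Module k N] (p : Submodule k N) (x : M ⊗[k] N)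
    (hx : x ∈ LinearMap.range (LinearMap.lTensor M p.subtype)) :
    ∃ (n : ℕ) (a : Fin n → M) (b : Fin n → N), (∀ i, b i ∈ p) ∧ x = ∑ i, a i ⊗ₜ[k] b i := by
  obtain ⟨w, rfl⟩ := hx
  obtain ⟨n, a, b, rfl⟩ := exists_fin_rep w
  exact ⟨n, a, fun i => (b i : N), fun i => (b i).2, by
    simp [map_sum, LinearMap.lTensor_tmul]⟩

/-- Fin-indexed representation with first legs in a submodule. -/
theorem exists_fin_rep_left {k M N : Type} [Field k] [AddCommGroup M] [AddCommGroup N]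
    [Module k M] [Module k N] (p : Submodule k M) (x : M ⊗[k] N)
    (hx : x ∈ LinearMap.range (LinearMap.rTensor N p.subtype)) :
    ∃ (n : ℕ) (a : Fin n → M) (b : Fin n → N), (∀ i, a i ∈ p) ∧ x = ∑ i, a i ⊗ₜ[k] b i := by
  obtain ⟨w, rfl⟩ := hx
  obtain ⟨n, a, b, rfl⟩ := exists_fin_rep w
  exact ⟨n, fun i => (a i : M), b, fun i => (a i).2, by
    simp [map_sum, LinearMap.rTensor_tmul]⟩

/-- Counit identity for a finite representation of the comultiplication. -/
theorem counit_rep {k H : Type} [Field k] [Ring H] [HopfAlgebra k H] {l : H} {n : ℕ}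
    {c d : Fin n → H} (h : Coalgebra.comul (R := k) l = ∑ j, c j ⊗ₜ[k] d j) :
    ∑ j, Coalgebra.counit (R := k) (d j) • c j = l := by
  have h1 := congrArg (LinearMap.lTensor H (Coalgebra.counit (R := k) (A := H))) h
  rw [Coalgebra.lTensor_counit_comul] at h1
  have h2 := congrArg (TensorProduct.rid k H) h1
  simpa [map_sum] using h2.symm

/-- Evaluation property of `comulDual`: `⟨Δ(α), x ⊗ y⟩ = α(xy)`. -/
theorem comulDual_eval {k H : Type} [Field k] [Ring H] [HopfAlgebra k H]
    [FiniteDimensional k H] (α : Module.Dual k H) (x y : H) :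
    α (x * y) = TensorProduct.dualDistrib k H H (comulDual k H α) (x ⊗ₜ[k] y) := by
  have h1 : (TensorProduct.dualDistribEquiv k H H) (comulDual k H α) =
      (LinearMap.mul' k H).dualMap α := by
    simp only [comulDual, LinearMap.coe_comp, Function.comp_apply, LinearEquiv.coe_coe]
    exact (TensorProduct.dualDistribEquiv k H H).apply_symm_apply _
  have h2 : (TensorProduct.dualDistribEquiv k H H) (comulDual k H α) =
      TensorProduct.dualDistrib k H H (comulDual k H α) := rfl
  rw [← h2, h1]
  simp [LinearMap.dualMap_apply, LinearMap.mul'_apply]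

/-- In the Drinfel'd double `D(H)` of a finite-dimensional Hopf algebra `H`, if `L ⊆ H`
is a left coideal subalgebra and `R* ⊆ H*` a right coideal with
`⟨α, S⁻¹(h)⟩ = ε(α)ε(h) = ⟨α, h⟩` for all `h ∈ L`, `α ∈ R*`, then the straightening
formulas hold: `h·α = ⟨α₍₂₎, h₍₁₎⟩ α₍₁₎ h₍₂₎` and `α·h = ⟨α₍₂₎, S⁻¹(h₍₁₎)⟩ h₍₂₎ α₍₁₎`;
in particular `L` and `R*` are permutable in `D(H)`: `L·R* = R*·L`. -/
theorem stmt15 (k H D : Type) [Field k] [Ring H] [HopfAlgebra k H]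
    [FiniteDimensional k H] [Ring D] [Algebra k D]
    (ιH : H →ₐ[k] D) (ιA : Module.Dual k H →ₗ[k] D)
    (hιH : Function.Injective ιH) (hιA : Function.Injective ιA)
    (Sinv : H →ₗ[k] H)
    (hS1 : ∀ h : H, Sinv (HopfAlgebra.antipode (R := k) h) = h)
    (hS2 : ∀ h : H, HopfAlgebra.antipode (R := k) (Sinv h) = h)
    (hmul : ∀ (h : H) (α : Module.Dual k H) (n : ℕ) (h1 h2 h3 : Fin n → H),
      comul2 k H h = ∑ i, h1 i ⊗ₜ[k] (h2 i ⊗ₜ[k] h3 i) →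
      ιH h * ιA α = ∑ i,
        ιA (α ∘ₗ LinearMap.mulLeft k (Sinv (h3 i)) ∘ₗ LinearMap.mulRight k (h1 i)) *
          ιH (h2 i))
    (hmul' : ∀ (h : H) (α : Module.Dual k H) (n : ℕ) (h1 h2 h3 : Fin n → H),
      comul2 k H h = ∑ i, h1 i ⊗ₜ[k] (h2 i ⊗ₜ[k] h3 i) →
      ιA α * ιH h = ∑ i,
        ιH (h2 i) *
          ιA (α ∘ₗ LinearMap.mulLeft k (h3 i) ∘ₗ LinearMap.mulRight k (Sinv (h1 i))))
    (L : Subalgebra k H) (Rs : Submodule k (Module.Dual k H))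
    (hLco : ∀ h ∈ L, Coalgebra.comul (R := k) h ∈
      LinearMap.range (LinearMap.lTensor H (Subalgebra.toSubmodule L).subtype))
    (hRco : ∀ α ∈ Rs, comulDual k H α ∈
      LinearMap.range (LinearMap.rTensor (Module.Dual k H) Rs.subtype))
    (hpair : ∀ h ∈ L, ∀ α ∈ Rs,
      α (Sinv h) = α 1 * Coalgebra.counit (R := k) h ∧
      α h = α 1 * Coalgebra.counit (R := k) h) :
    (∀ h ∈ L, ∀ α ∈ Rs, ∀ (n : ℕ) (h1 h2 : Fin n → H),
      Coalgebra.comul (R := k) h = ∑ i, h1 i ⊗ₜ[k] h2 i →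
      ιH h * ιA α = ∑ i, ιA (α ∘ₗ LinearMap.mulRight k (h1 i)) * ιH (h2 i)) ∧
    (∀ h ∈ L, ∀ α ∈ Rs, ∀ (n : ℕ) (h1 h2 : Fin n → H),
      Coalgebra.comul (R := k) h = ∑ i, h1 i ⊗ₜ[k] h2 i →
      ιA α * ιH h = ∑ i, ιH (h2 i) * ιA (α ∘ₗ LinearMap.mulRight k (Sinv (h1 i)))) ∧
    Submodule.map ιH.toLinearMap (Subalgebra.toSubmodule L) * Submodule.map ιA Rs =
      Submodule.map ιA Rs * Submodule.map ιH.toLinearMap (Subalgebra.toSubmodule L) := by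
  classical
  -- Finite representations of `comulDual α` with first legs in `Rs`, and the
  -- resulting multiplicativity formula.
  have hRrep : ∀ α ∈ Rs, ∃ (n : ℕ) (β : Fin n → Module.Dual k H) (γ : Fin n → Module.Dual k H),
      (∀ t, β t ∈ Rs) ∧ ∀ x y : H, α (x * y) = ∑ t, β t x * γ t y := by
    intro α hα
    obtain ⟨n, β, γ, hβ, hrep⟩ := exists_fin_rep_left Rs _ (hRco α hα)
    refine ⟨n, β, γ, hβ, fun x y => ?_⟩
    rw [comulDual_eval α x y, hrep, map_sum]
    simp [TensorProduct.dualDistrib_apply]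
  -- (i) stability of `Rs` under right translation
  have hcompmem : ∀ α ∈ Rs, ∀ x : H, α ∘ₗ LinearMap.mulRight k x ∈ Rs := by
    intro α hα x
    obtain ⟨n, β, γ, hβ, hrep⟩ := hRrep α hα
    have : α ∘ₗ LinearMap.mulRight k x = ∑ t, γ t x • β t := by
      apply LinearMap.ext; intro m
      simp only [LinearMap.coe_comp, Function.comp_apply, LinearMap.mulRight_apply,
        LinearMap.coe_sum, Finset.sum_apply, LinearMap.smul_apply, smul_eq_mul]
      rw [hrep m x]
      exact Finset.sum_congr rfl fun t _ => mul_comm _ _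
    rw [this]
    exact Submodule.sum_mem _ fun t _ => Submodule.smul_mem _ _ (hβ t)
  -- (ii) the key pairing consequences
  have hleft : ∀ α ∈ Rs, ∀ d ∈ L,
      α ∘ₗ LinearMap.mulLeft k (Sinv d) = Coalgebra.counit (R := k) d • α ∧
      α ∘ₗ LinearMap.mulLeft k d = Coalgebra.counit (R := k) d • α := by
    intro α hα d hd
    obtain ⟨n, β, γ, hβ, hrep⟩ := hRrep α hα
    have hone : ∀ m : H, ∑ t, β t 1 * γ t m = α m := by
      intro m
      rw [← hrep 1 m, one_mul]
    constructor
    · apply LinearMap.ext; intro m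
      simp only [LinearMap.coe_comp, Function.comp_apply, LinearMap.mulLeft_apply,
        LinearMap.smul_apply, smul_eq_mul]
      rw [hrep (Sinv d) m]
      calc ∑ t, β t (Sinv d) * γ t m
          = ∑ t, Coalgebra.counit (R := k) d * (β t 1 * γ t m) := by
            refine Finset.sum_congr rfl fun t _ => ?_
            rw [(hpair d hd (β t) (hβ t)).1]; ring
        _ = Coalgebra.counit (R := k) d * α m := by
            rw [← Finset.mul_sum, hone m]
    · apply LinearMap.ext; intro m
      simp only [LinearMap.coe_comp, Function.comp_apply, LinearMap.mulLeft_apply,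
        LinearMap.smul_apply, smul_eq_mul]
      rw [hrep d m]
      calc ∑ t, β t d * γ t m
          = ∑ t, Coalgebra.counit (R := k) d * (β t 1 * γ t m) := by
            refine Finset.sum_congr rfl fun t _ => ?_
            rw [(hpair d hd (β t) (hβ t)).2]; ring
        _ = Coalgebra.counit (R := k) d * α m := by
            rw [← Finset.mul_sum, hone m]
  -- finite representations of `comul h` with second legs in `L`
  have hLrep : ∀ h ∈ L, ∃ (n : ℕ) (a l : Fin n → H), (∀ i, l i ∈ L) ∧
      Coalgebra.comul (R := k) h = ∑ i, a i ⊗ₜ[k] l i := by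
    intro h hh
    obtain ⟨n, a, l, hl, hrep⟩ := exists_fin_rep_right (Subalgebra.toSubmodule L) _ (hLco h hh)
    exact ⟨n, a, l, fun i => hl i, hrep⟩
  -- structured representation of `comul2 h`
  have hstruct : ∀ h ∈ L, ∃ (n : ℕ) (a c d : Fin n → H),
      (∀ i, d i ∈ L) ∧
      comul2 k H h = ∑ i, a i ⊗ₜ[k] (c i ⊗ₜ[k] d i) ∧
      (∑ i, Coalgebra.counit (R := k) (d i) • (a i ⊗ₜ[k] c i)) = Coalgebra.comul (R := k) h := by
    intro h hh
    obtain ⟨n, a, l, hl, hrep⟩ := hLrep h hh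
    choose m c d hdL hrep2 using fun i => hLrep (l i) (hl i)
    -- flatten `Σ i, Fin (m i)` into `Fin N`
    let e := Fintype.equivFin ((i : Fin n) × Fin (m i))
    refine ⟨Fintype.card ((i : Fin n) × Fin (m i)),
      fun t => a (e.symm t).1, fun t => c (e.symm t).1 (e.symm t).2,
      fun t => d (e.symm t).1 (e.symm t).2, fun t => hdL _ _, ?_, ?_⟩
    · have : comul2 k H h = ∑ i, a i ⊗ₜ[k] (Coalgebra.comul (R := k) (l i)) := by
        rw [comul2, LinearMap.comp_apply, hrep, map_sum]
        simp [LinearMap.lTensor_tmul]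
      rw [this]
      have : ∑ i, a i ⊗ₜ[k] (Coalgebra.comul (R := k) (l i))
          = ∑ p : (i : Fin n) × Fin (m i), a p.1 ⊗ₜ[k] (c p.1 p.2 ⊗ₜ[k] d p.1 p.2) := by
        rw [← Finset.univ_sigma_univ, Finset.sum_sigma]
        refine Finset.sum_congr rfl fun i _ => ?_
        rw [hrep2 i]
        rw [TensorProduct.tmul_sum]
      rw [this]
      exact (Equiv.sum_comp e.symm
        (fun p : (i : Fin n) × Fin (m i) => a p.1 ⊗ₜ[k] (c p.1 p.2 ⊗ₜ[k] d p.1 p.2))).symm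
    · rw [Equiv.sum_comp e.symm
        (fun p : (i : Fin n) × Fin (m i) =>
          Coalgebra.counit (R := k) (d p.1 p.2) • (a p.1 ⊗ₜ[k] c p.1 p.2))]
      rw [← Finset.univ_sigma_univ, Finset.sum_sigma]
      rw [hrep]
      refine Finset.sum_congr rfl fun i _ => ?_
      calc ∑ j, Coalgebra.counit (R := k) (d i j) • (a i ⊗ₜ[k] c i j)
          = a i ⊗ₜ[k] (∑ j, Coalgebra.counit (R := k) (d i j) • c i j) := by
            rw [TensorProduct.tmul_sum]
            exact Finset.sum_congr rfl fun j _ => (TensorProduct.tmul_smul _ _ _).symm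
        _ = a i ⊗ₜ[k] l i := by rw [counit_rep (hrep2 i)]
  -- the bilinear maps packaging the right-hand sides
  have compRight_add : ∀ (α : Module.Dual k H) (x x' : H),
      α ∘ₗ LinearMap.mulRight k (x + x') =
        α ∘ₗ LinearMap.mulRight k x + α ∘ₗ LinearMap.mulRight k x' := by
    intro α x x'
    apply LinearMap.ext; intro m
    simp [mul_add]
  have compRight_smul : ∀ (α : Module.Dual k H) (r : k) (x : H),
      α ∘ₗ LinearMap.mulRight k (r • x) = r • (α ∘ₗ LinearMap.mulRight k x) := by
    intro α r x
    apply LinearMap.ext; intro m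
    simp [mul_smul_comm]
  have mkB : ∀ α : Module.Dual k H, ∃ B : H ⊗[k] H →ₗ[k] D,
      ∀ x y : H, B (x ⊗ₜ[k] y) = ιA (α ∘ₗ LinearMap.mulRight k x) * ιH y := by
    intro α
    refine ⟨TensorProduct.lift (LinearMap.mk₂ k
      (fun x y => ιA (α ∘ₗ LinearMap.mulRight k x) * ιH y)
      (fun x x' y => ?_) (fun r x y => ?_) (fun x y y' => ?_) (fun r x y => ?_)),
      fun x y => rfl⟩
    · rw [compRight_add, map_add, add_mul]
    · rw [compRight_smul, map_smul, smul_mul_assoc]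
    · rw [map_add, mul_add]
    · rw [map_smul, mul_smul_comm]
  have mkB' : ∀ α : Module.Dual k H, ∃ B : H ⊗[k] H →ₗ[k] D,
      ∀ x y : H, B (x ⊗ₜ[k] y) = ιH y * ιA (α ∘ₗ LinearMap.mulRight k (Sinv x)) := by
    intro α
    refine ⟨TensorProduct.lift (LinearMap.mk₂ k
      (fun x y => ιH y * ιA (α ∘ₗ LinearMap.mulRight k (Sinv x)))
      (fun x x' y => ?_) (fun r x y => ?_) (fun x y y' => ?_) (fun r x y => ?_)),
      fun x y => rfl⟩
    · rw [map_add, compRight_add, map_add, mul_add]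
    · rw [map_smul, compRight_smul, map_smul, mul_smul_comm]
    · rw [map_add, add_mul]
    · rw [map_smul, smul_mul_assoc]
  -- Part 1
  have part1 : ∀ h ∈ L, ∀ α ∈ Rs, ∀ (n : ℕ) (h1 h2 : Fin n → H),
      Coalgebra.comul (R := k) h = ∑ i, h1 i ⊗ₜ[k] h2 i →
      ιH h * ιA α = ∑ i, ιA (α ∘ₗ LinearMap.mulRight k (h1 i)) * ιH (h2 i) := by
    intro h hh α hα n h1 h2 hrep
    obtain ⟨B, hB⟩ := mkB α
    obtain ⟨N, a, c, d, hdL, hrep2, hcounit⟩ := hstruct h hh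
    have key : ιH h * ιA α = B (Coalgebra.comul (R := k) h) := by
      rw [hmul h α N a c d hrep2, ← hcounit, map_sum]
      refine Finset.sum_congr rfl fun t _ => ?_
      rw [map_smul, hB]
      have : α ∘ₗ LinearMap.mulLeft k (Sinv (d t)) ∘ₗ LinearMap.mulRight k (a t)
          = Coalgebra.counit (R := k) (d t) • (α ∘ₗ LinearMap.mulRight k (a t)) := by
        rw [← LinearMap.comp_assoc, (hleft α hα (d t) (hdL t)).1, LinearMap.smul_comp]
      rw [this, map_smul, smul_mul_assoc]
    rw [key, hrep, map_sum]
    exact Finset.sum_congr rfl fun i _ => hB _ _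
  -- Part 2
  have part2 : ∀ h ∈ L, ∀ α ∈ Rs, ∀ (n : ℕ) (h1 h2 : Fin n → H),
      Coalgebra.comul (R := k) h = ∑ i, h1 i ⊗ₜ[k] h2 i →
      ιA α * ιH h = ∑ i, ιH (h2 i) * ιA (α ∘ₗ LinearMap.mulRight k (Sinv (h1 i))) := by
    intro h hh α hα n h1 h2 hrep
    obtain ⟨B, hB⟩ := mkB' α
    obtain ⟨N, a, c, d, hdL, hrep2, hcounit⟩ := hstruct h hh
    have key : ιA α * ιH h = B (Coalgebra.comul (R := k) h) := by
      rw [hmul' h α N a c d hrep2, ← hcounit, map_sum]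
      refine Finset.sum_congr rfl fun t _ => ?_
      rw [map_smul, hB]
      have : α ∘ₗ LinearMap.mulLeft k (d t) ∘ₗ LinearMap.mulRight k (Sinv (a t))
          = Coalgebra.counit (R := k) (d t) • (α ∘ₗ LinearMap.mulRight k (Sinv (a t))) := by
        rw [← LinearMap.comp_assoc, (hleft α hα (d t) (hdL t)).2, LinearMap.smul_comp]
      rw [this, map_smul, mul_smul_comm]
    rw [key, hrep, map_sum]
    exact Finset.sum_congr rfl fun i _ => hB _ _
  refine ⟨part1, part2, ?_⟩
  -- Part 3
  apply le_antisymm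
  · rw [Submodule.mul_le]
    rintro _ ⟨h, hh, rfl⟩ _ ⟨α, hα, rfl⟩
    obtain ⟨n, a, l, hl, hrep⟩ := hLrep h (by simpa using hh)
    rw [show ιH.toLinearMap h = ιH h from rfl, part1 h (by simpa using hh) α hα n a l hrep]
    refine Submodule.sum_mem _ fun i _ => Submodule.mul_mem_mul ?_ ?_
    · exact ⟨α ∘ₗ LinearMap.mulRight k (a i), hcompmem α hα (a i), rfl⟩
    · exact ⟨l i, by simpa using hl i, rfl⟩
  · rw [Submodule.mul_le]
    rintro _ ⟨α, hα, rfl⟩ _ ⟨h, hh, rfl⟩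
    obtain ⟨n, a, l, hl, hrep⟩ := hLrep h (by simpa using hh)
    rw [show ιH.toLinearMap h = ιH h from rfl, part2 h (by simpa using hh) α hα n a l hrep]
    refine Submodule.sum_mem _ fun i _ => Submodule.mul_mem_mul ?_ ?_
    · exact ⟨l i, by simpa using hl i, rfl⟩
    · exact ⟨α ∘ₗ LinearMap.mulRight k (Sinv (a i)), hcompmem α hα (Sinv (a i)), rfl⟩
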